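/- Let ψ : (𝔽_q, +) → ℂˣ be a nontrivial additive character, and define χ_ψ : N → ℂˣ by χ_ψ(1+aε, bε; cε, 1−aε) = ψ(c). Then the stabilizer {g ∈ SL₂(𝔽_q) : χ_ψ(i(g)⁻¹ n i(g)) = χ_ψ(n) for all n ∈ N} equals the set of matrices (x, y; 0, x⁻¹) with x ∈ {1, −1} and y ∈ 𝔽_q; in particular this stabilizer is an abelian group of order 2q. -/

import Mathlib

open Matrix TrivSqZeroExt

/-- The reduction homomorphism `SL₂(𝔽_q[X]/(X²)) → SL₂(𝔽_q)` induced by `ε ↦ 0`. -/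
noncomputable def rho (F : Type) [Field F] :
    Matrix.SpecialLinearGroup (Fin 2) (DualNumber F) →* Matrix.SpecialLinearGroup (Fin 2) F :=
  Matrix.SpecialLinearGroup.map (TrivSqZeroExt.fstHom F F F).toRingHom

/-- The homomorphism `SL₂(𝔽_q) → SL₂(𝔽_q[X]/(X²))` induced by the ring inclusion. -/
noncomputable def iota (F : Type) [Field F] :
    Matrix.SpecialLinearGroup (Fin 2) F →* Matrix.SpecialLinearGroup (Fin 2) (DualNumber F) :=
  Matrix.SpecialLinearGroup.map (TrivSqZeroExt.inlHom F F)

/-- An element of the kernel of `rho`. -/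
noncomputable def kelt (F : Type) [Field F] (α β γ : F) :
    Matrix.SpecialLinearGroup (Fin 2) (DualNumber F) :=
  ⟨!![inl 1 + inr α, inr β; inr γ, inl 1 + inr (-α)], by
    rw [Matrix.det_fin_two_of]; ext <;> simp [mul_comm]⟩

lemma kelt_mem_ker (F : Type) [Field F] (α β γ : F) : kelt F α β γ ∈ (rho F).ker := by
  rw [MonoidHom.mem_ker, rho, show ∀ A B : Matrix.SpecialLinearGroup (Fin 2) F, A = B ↔ A.val = B.val from fun A B => Subtype.ext_iff]
  erw [Matrix.SpecialLinearGroup.map_apply_coe]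
  ext i j
  fin_cases i <;> fin_cases j <;>
    simp [kelt, Matrix.SpecialLinearGroup.map_apply_coe, Matrix.one_apply]

lemma conj_snd (F : Type) [Field F] (g : Matrix.SpecialLinearGroup (Fin 2) F)
    (m : Matrix.SpecialLinearGroup (Fin 2) (DualNumber F)) (α β γ δ : F)
    (hm : m.val = !![inl 1 + inr α, inr β; inr γ, inl 1 + inr δ]) :
    (((iota F g)⁻¹ * m * iota F g).val 1 0).snd
      = g.val 0 0 * g.val 0 0 * γ - g.val 1 0 * g.val 1 0 * β
        - g.val 0 0 * g.val 1 0 * α + g.val 0 0 * g.val 1 0 * δ := by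
  rw [← map_inv, Matrix.SpecialLinearGroup.SL2_inv_expl g]
  simp only [Matrix.SpecialLinearGroup.coe_mul, iota, Matrix.SpecialLinearGroup.map_apply_coe,
    RingHom.mapMatrix_apply, Matrix.mul_apply, Fin.sum_univ_two, hm, Matrix.map_apply]
  erw [Matrix.SpecialLinearGroup.map_apply_coe, RingHom.mapMatrix_apply, Matrix.map_apply,
    Matrix.map_apply]
  simp [Matrix.mul_apply, Fin.sum_univ_two, mul_comm, mul_assoc]
  ring

/-- Elements of the stabilizer, parametrized by `Bool × F`. -/
noncomputable def selt (F : Type) [Field F] (z : Bool × F) :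
    Matrix.SpecialLinearGroup (Fin 2) F :=
  ⟨!![(if z.1 then 1 else (-1 : F)), z.2; 0, (if z.1 then 1 else -1)], by
    rw [Matrix.det_fin_two_of]
    rcases z with ⟨b, y⟩
    cases b <;> norm_num⟩

lemma selt_val (F : Type) [Field F] (z : Bool × F) :
    (selt F z).val = !![(if z.1 then 1 else (-1 : F)), z.2; 0, (if z.1 then 1 else -1)] := rfl

theorem stmt3 (F : Type) [Field F] [Fintype F] (p n : ℕ) (hp : p.Prime) (hodd : p ≠ 2)
    (hn : n ≠ 0) (hcard : Fintype.card F = p ^ n)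
    (ψ : AddChar F ℂˣ) (hψ : ψ ≠ 1)
    -- `S` is the stabilizer of `χ_ψ` in `SL₂(𝔽_q)`, where for `m ∈ N = ker ρ`,
    -- `χ_ψ(m) = ψ(c)` with `c` the `ε`-coefficient of the lower-left entry of `m`
    (S : Set (Matrix.SpecialLinearGroup (Fin 2) F))
    (hS : S = {g | ∀ m ∈ (rho F).ker,
        ψ ((((iota F g)⁻¹ * m * iota F g).val 1 0).snd) = ψ ((m.val 1 0).snd)}) :
    S = {g | ∃ x y : F, (x = 1 ∨ x = -1) ∧ g.val = !![x, y; 0, x⁻¹]} ∧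
    (∀ g ∈ S, ∀ h ∈ S, g * h = h * g) ∧
    Nat.card S = 2 * Fintype.card F := by
  -- `-1 ≠ 1` in `F`
  have hchar2 : (-1 : F) ≠ 1 := by
    intro h
    have h2 : (2 : F) = 0 := by linear_combination -h
    have hdvd : ringChar F ∣ 2 := (ringChar.spec F 2).mp h2
    have hne0 : ringChar F ≠ 0 := by
      intro h0
      rw [h0] at hdvd
      exact two_ne_zero (Nat.eq_zero_of_zero_dvd hdvd)
    have hne1 : ringChar F ≠ 1 := CharP.ringChar_ne_one
    have hr2 : ringChar F = 2 := by
      rcases (Nat.dvd_prime Nat.prime_two).mp hdvd with h | h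
      · exact absurd h hne1
      · exact h
    have heven := FiniteField.even_card_of_char_two hr2
    have hoddcard : Fintype.card F % 2 = 1 := by
      rw [hcard]
      exact Nat.odd_iff.mp ((hp.odd_of_ne_two hodd).pow)
    omega
  -- nontriviality of ψ
  have key : ∀ t : F, (∀ z : F, ψ (t * z) = 1) → t = 0 := by
    intro t h
    by_contra ht
    apply hψ
    apply DFunLike.ext
    intro z
    rw [AddChar.one_apply]
    have := h (t⁻¹ * z)
    rwa [mul_inv_cancel_left₀ ht] at this
  have hψ0 : ψ 0 = 1 := AddChar.map_zero_eq_one ψ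
  -- the main characterization
  have hmain : S = {g | ∃ x y : F, (x = 1 ∨ x = -1) ∧ g.val = !![x, y; 0, x⁻¹]} := by
    subst hS
    ext g
    constructor
    · intro hg
      have hc0 : g.val 1 0 = 0 := by
        apply mul_self_eq_zero.mp
        apply neg_eq_zero.mp
        refine key _ (fun z => ?_)
        have h := hg (kelt F 0 z 0) (kelt_mem_ker F 0 z 0)
        rw [conj_snd F g _ 0 z 0 (-0) rfl] at h
        rw [show g.val 0 0 * g.val 0 0 * 0 - g.val 1 0 * g.val 1 0 * z
            - g.val 0 0 * g.val 1 0 * 0 + g.val 0 0 * g.val 1 0 * (-0)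
            = -(g.val 1 0 * g.val 1 0) * z by ring] at h
        have hz : ((kelt F 0 z 0).val 1 0).snd = 0 := by simp [kelt]
        rwa [hz, hψ0] at h
      have ha1 : g.val 0 0 * g.val 0 0 = 1 := by
        refine sub_eq_zero.mp (key _ (fun z => ?_))
        have h := hg (kelt F 0 0 z) (kelt_mem_ker F 0 0 z)
        rw [conj_snd F g _ 0 0 z (-0) rfl] at h
        rw [show g.val 0 0 * g.val 0 0 * z - g.val 1 0 * g.val 1 0 * 0
            - g.val 0 0 * g.val 1 0 * 0 + g.val 0 0 * g.val 1 0 * (-0)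
            = z + (g.val 0 0 * g.val 0 0 - 1) * z by ring,
          AddChar.map_add_eq_mul] at h
        have hz : ((kelt F 0 0 z).val 1 0).snd = z := by simp [kelt]
        rw [hz] at h
        exact mul_eq_left.mp h
      have hd1 : g.val 1 1 = (g.val 0 0)⁻¹ := by
        have hdet := g.property
        rw [Matrix.det_fin_two] at hdet
        have had : g.val 0 0 * g.val 1 1 = 1 := by
          linear_combination hdet + g.val 0 1 * hc0
        exact (inv_eq_of_mul_eq_one_right had).symm
      refine ⟨g.val 0 0, g.val 0 1, mul_self_eq_one_iff.mp ha1, ?_⟩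
      ext i j
      fin_cases i <;> fin_cases j <;> simp [hc0, hd1]
    · rintro ⟨x, y, hx, hval⟩ m hm
      -- describe m
      have hfst : ∀ i j, (m.val i j).fst = (1 : Matrix (Fin 2) (Fin 2) F) i j := by
        rw [MonoidHom.mem_ker, rho, show ∀ A B : Matrix.SpecialLinearGroup (Fin 2) F, A = B ↔ A.val = B.val from fun A B => Subtype.ext_iff] at hm
        intro i j
        have := congrFun (congrFun hm i) j
        simpa [Matrix.SpecialLinearGroup.map_apply_coe] using this
      have hmval : m.val = !![inl 1 + inr ((m.val 0 0).snd), inr ((m.val 0 1).snd);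
          inr ((m.val 1 0).snd), inl 1 + inr ((m.val 1 1).snd)] := by
        ext i j <;> fin_cases i <;> fin_cases j <;>
          first
            | simpa [Matrix.one_apply] using hfst _ _
            | simp [hfst]
      rw [conj_snd F g m _ _ _ _ hmval, hval]
      have hx2 : x * x = 1 := by rcases hx with h | h <;> rw [h] <;> ring
      simp [hx2]
  refine ⟨hmain, ?_, ?_⟩
  · -- abelian
    intro g hg h hh
    rw [hmain] at hg hh
    obtain ⟨x, y, hx, hgv⟩ := hg
    obtain ⟨x', y', hx', hhv⟩ := hh
    apply Subtype.ext
    rw [Matrix.SpecialLinearGroup.coe_mul, Matrix.SpecialLinearGroup.coe_mul, hgv, hhv]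
    rcases hx with h1 | h1 <;> rcases hx' with h2 | h2 <;> subst h1 h2 <;>
      norm_num [Matrix.mul_fin_two] <;> ring_nf
  · -- cardinality
    have hinj : Function.Injective (selt F) := by
      rintro ⟨b, y⟩ ⟨b', y'⟩ hfeq
      rw [show ∀ A B : Matrix.SpecialLinearGroup (Fin 2) F, A = B ↔ A.val = B.val from fun A B => Subtype.ext_iff, selt_val, selt_val] at hfeq
      have h01 := congrFun (congrFun hfeq 0) 1
      have h00 := congrFun (congrFun hfeq 0) 0
      simp only [Matrix.cons_val', Matrix.cons_val_zero, Matrix.cons_val_one,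
        Matrix.head_cons, Matrix.empty_val', Matrix.cons_val_fin_one,
        Matrix.head_fin_const] at h01 h00
      cases b <;> cases b' <;> simp only [Bool.false_eq_true, if_true, if_false] at h00 h01
      · exact congrArg (Prod.mk false) h01
      · exact absurd h00 hchar2
      · exact absurd h00.symm hchar2
      · exact congrArg (Prod.mk true) h01
    have hrange : S = Set.range (selt F) := by
      rw [hmain]
      ext g
      constructor
      · rintro ⟨x, y, hx, hval⟩
        rcases hx with h | h
        · refine ⟨(true, y), Subtype.ext ?_⟩
          rw [selt_val, hval, h]
          norm_num
        · refine ⟨(false, y), Subtype.ext ?_⟩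
          rw [selt_val, hval, h]
          norm_num
      · rintro ⟨⟨b, y⟩, rfl⟩
        cases b
        · refine ⟨-1, y, Or.inr rfl, ?_⟩
          rw [selt_val]
          norm_num
        · refine ⟨1, y, Or.inl rfl, ?_⟩
          rw [selt_val]
          norm_num
    rw [hrange, Nat.card_range_of_injective hinj, Nat.card_prod,
      Nat.card_eq_fintype_card, Nat.card_eq_fintype_card]
    norm_num
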